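/- For λ < 0 and all x > 0, 1 - F_λ(x) > (2φ(x)φ(λx) / (|λ|(1+λ²)x²)) · [1 - ((1+λ²)²/λ²) x^{-2}], where F_λ is the skew-normal cdf with parameter λ. -/

import Mathlib

open Real MeasureTheory Filter
open Set

noncomputable def stdPhi (x : ℝ) : ℝ := (Real.sqrt (2 * Real.pi))⁻¹ * Real.exp (-x ^ 2 / 2)

noncomputable def stdCdf (x : ℝ) : ℝ := ∫ t in Set.Iic x, stdPhi t

lemma stdPhi_pos (x : ℝ) : 0 < stdPhi x := by
  unfold stdPhi
  positivity

lemma stdPhi_cont : Continuous stdPhi := by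
  unfold stdPhi; fun_prop

lemma stdPhi_integrable : Integrable stdPhi := by
  have h : Integrable (fun x : ℝ => Real.exp (-(1/2) * x ^ 2)) := integrable_exp_neg_mul_sq (by norm_num)
  have := h.const_mul (Real.sqrt (2 * Real.pi))⁻¹
  convert this using 2 with x
  unfold stdPhi
  ring_nf

lemma stdPhi_integral : ∫ x, stdPhi x = 1 := by
  have h : ∫ x : ℝ, Real.exp (-(1/2) * x ^ 2) = Real.sqrt (Real.pi / (1/2)) := integral_gaussian (1/2)
  unfold stdPhi
  rw [show (fun x : ℝ => (Real.sqrt (2 * Real.pi))⁻¹ * Real.exp (-x ^ 2 / 2)) = fun x : ℝ => (Real.sqrt (2 * Real.pi))⁻¹ * Real.exp (-(1/2) * x ^ 2) by funext x; ring_nf]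
  rw [integral_const_mul, h]
  rw [show Real.pi / (1/2) = 2 * Real.pi by ring]
  exact inv_mul_cancel₀ (by positivity)

lemma stdPhi_even (x : ℝ) : stdPhi (-x) = stdPhi x := by unfold stdPhi; ring_nf

lemma stdCdf_mono : Monotone stdCdf := by
  intro a b hab
  exact setIntegral_mono_set stdPhi_integrable.integrableOn
    (Eventually.of_forall fun t => (stdPhi_pos t).le) (HasSubset.Subset.eventuallyLE (Iic_subset_Iic.2 hab))

lemma stdCdf_meas : Measurable stdCdf := stdCdf_mono.measurable

lemma stdCdf_nonneg (x : ℝ) : 0 ≤ stdCdf x :=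
  setIntegral_nonneg measurableSet_Iic fun t _ => (stdPhi_pos t).le

lemma stdCdf_le_one (x : ℝ) : stdCdf x ≤ 1 := by
  rw [← stdPhi_integral]
  exact setIntegral_le_integral stdPhi_integrable (Eventually.of_forall fun t => (stdPhi_pos t).le)

lemma stdCdf_add_Ioi (x : ℝ) : stdCdf x + ∫ t in Set.Ioi x, stdPhi t = 1 := by
  rw [← stdPhi_integral]
  exact intervalIntegral.integral_Iic_add_Ioi stdPhi_integrable.integrableOn stdPhi_integrable.integrableOn

lemma stdCdf_neg (x : ℝ) : stdCdf (-x) = 1 - stdCdf x := by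
  have : stdCdf (-x) = ∫ t in Set.Ioi x, stdPhi t := by
    unfold stdCdf
    rw [show (∫ t in Set.Iic (-x), stdPhi t) = ∫ t in Set.Iic (-x), stdPhi (-t) by
      exact setIntegral_congr_fun measurableSet_Iic fun t _ => (stdPhi_even t).symm]
    rw [integral_comp_neg_Iic]
    norm_num
  rw [this]
  have := stdCdf_add_Ioi x
  linarith

lemma stdPhi_hasDeriv (x : ℝ) : HasDerivAt stdPhi (-x * stdPhi x) x := by
  have h : HasDerivAt (fun x : ℝ => -x ^ 2 / 2) (-x) x := by
    have := ((hasDerivAt_pow 2 x).neg).div_const 2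
    simpa using this.congr_deriv (by ring)
  have h2 := (h.exp).const_mul (Real.sqrt (2 * Real.pi))⁻¹
  have : HasDerivAt stdPhi ((Real.sqrt (2 * Real.pi))⁻¹ * (Real.exp (-x ^ 2 / 2) * -x)) x := h2
  exact this.congr_deriv (by unfold stdPhi; ring)

lemma stdPhi_tendsto_zero : Tendsto stdPhi atTop (nhds 0) := by
  have h1 : Tendsto (fun t : ℝ => -t ^ 2 / 2) atTop atBot := by
    apply Tendsto.atBot_div_const (by norm_num)
    exact tendsto_neg_atBot_iff.mpr (tendsto_pow_atTop two_ne_zero)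
  have := (Real.tendsto_exp_atBot.comp h1).const_mul (Real.sqrt (2 * Real.pi))⁻¹
  simp only [mul_zero] at this
  exact this.congr fun x => by simp [stdPhi, Function.comp]

lemma mills {u : ℝ} (hu : 0 < u) :
    stdPhi u * (u⁻¹ - u⁻¹ ^ 3) < ∫ t in Set.Ioi u, stdPhi t := by
  set F : ℝ → ℝ := fun t => -(stdPhi t * (t⁻¹ - t⁻¹ ^ 3)) with hF
  set F' : ℝ → ℝ := fun t => stdPhi t * (1 - 3 * t⁻¹ ^ 4) with hF'
  have hderiv : ∀ t ∈ Set.Ici u, HasDerivAt F (F' t) t := by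
    intro t ht
    have ht0 : (0:ℝ) < t := lt_of_lt_of_le hu ht
    have hinv : HasDerivAt (fun s : ℝ => s⁻¹) (-(t ^ 2)⁻¹) t := hasDerivAt_inv ht0.ne'
    have hinv3 : HasDerivAt (fun s : ℝ => s⁻¹ ^ 3) (3 * t⁻¹ ^ 2 * -(t ^ 2)⁻¹) t := by
      simpa using hinv.fun_pow 3
    have hg : HasDerivAt (fun s : ℝ => s⁻¹ - s⁻¹ ^ 3) (-(t ^ 2)⁻¹ - 3 * t⁻¹ ^ 2 * -(t ^ 2)⁻¹) t :=
      hinv.sub hinv3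
    have := ((stdPhi_hasDeriv t).mul hg).neg
    apply this.congr_deriv
    simp only [hF']
    have hne : t ≠ 0 := ht0.ne'
    field_simp
    ring
  have f'int : IntegrableOn F' (Set.Ioi u) := by
    apply Integrable.mono' (g := fun t => (1 + 3 * u⁻¹ ^ 4) * stdPhi t)
      (stdPhi_integrable.const_mul _).integrableOn
    · exact ((stdPhi_cont.continuousOn).mul (by fun_prop (disch := intro t ht; exact (lt_of_lt_of_le hu (le_of_lt ht)).ne'))).aestronglyMeasurable measurableSet_Ioi
    · filter_upwards [ae_restrict_mem measurableSet_Ioi] with t ht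
      have ht0 : 0 < t := lt_trans hu ht
      rw [hF', Real.norm_eq_abs, abs_mul, abs_of_pos (stdPhi_pos t)]
      rw [mul_comm]
      apply mul_le_mul _ le_rfl (stdPhi_pos t).le (by positivity)
      rw [abs_le]
      have h1 : t⁻¹ ^ 4 ≤ u⁻¹ ^ 4 := by
        apply pow_le_pow_left₀ (inv_pos.2 ht0).le
        exact inv_anti₀ hu ht.le
      have h2 : 0 < t⁻¹ ^ 4 := pow_pos (inv_pos.2 ht0) 4
      have h3 : 0 < u⁻¹ ^ 4 := pow_pos (inv_pos.2 hu) 4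
      constructor <;> nlinarith
  have htend : Tendsto F atTop (nhds 0) := by
    have hinv := tendsto_inv_atTop_zero (𝕜 := ℝ)
    have h2 : Tendsto (fun t : ℝ => t⁻¹ - t⁻¹ ^ 3) atTop (nhds (0 - 0 ^ 3)) :=
      hinv.sub (hinv.pow 3)
    rw [show (0:ℝ) - 0 ^ 3 = 0 by norm_num] at h2
    have h3 := (stdPhi_tendsto_zero.mul h2).neg
    rw [show -(0 * 0 : ℝ) = 0 by norm_num] at h3
    exact h3
  have key : ∫ t in Set.Ioi u, F' t = 0 - F u :=
    integral_Ioi_of_hasDerivAt_of_tendsto ((hderiv u Set.self_mem_Ici).continuousAt.continuousWithinAt)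
      (fun t ht => hderiv t (Set.Ioi_subset_Ici_self ht)) f'int htend
  have hFu : 0 - F u = stdPhi u * (u⁻¹ - u⁻¹ ^ 3) := by rw [hF]; ring
  rw [← hFu, ← key]
  have hdiff : 0 < ∫ t in Set.Ioi u, (stdPhi t - F' t) := by
    rw [setIntegral_pos_iff_support_of_nonneg_ae]
    · have : (Function.support fun t => stdPhi t - F' t) ∩ Set.Ioi u = Set.Ioi u := by
        apply Set.inter_eq_self_of_subset_right
        intro t ht
        have ht0 : 0 < t := lt_trans hu ht
        simp only [Function.mem_support]
        have hpos : 0 < stdPhi t - F' t := by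
          have : stdPhi t - F' t = stdPhi t * (3 * t⁻¹ ^ 4) := by rw [hF']; ring
          rw [this]
          exact mul_pos (stdPhi_pos t) (mul_pos three_pos (pow_pos (inv_pos.2 ht0) 4))
        exact hpos.ne' 
      rw [this, Real.volume_Ioi]
      norm_num
    · filter_upwards [ae_restrict_mem measurableSet_Ioi] with t ht
      have ht0 : 0 < t := lt_trans hu ht
      have : stdPhi t - F' t = stdPhi t * (3 * t⁻¹ ^ 4) := by rw [hF']; ring
      rw [this]
      exact (mul_pos (stdPhi_pos t) (mul_pos three_pos (pow_pos (inv_pos.2 ht0) 4))).le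
    · exact stdPhi_integrable.integrableOn.sub f'int
  have := integral_sub stdPhi_integrable.integrableOn f'int
  rw [this] at hdiff
  linarith

noncomputable def snCdf (l x : ℝ) : ℝ := ∫ t in Set.Iic x, 2 * stdPhi t * stdCdf (l * t)

lemma g_integrable (l : ℝ) : Integrable (fun t => 2 * stdPhi t * stdCdf (l * t)) := by
  apply Integrable.mono' (g := fun t => 2 * stdPhi t) ((stdPhi_integrable.const_mul 2))
  · exact ((measurable_const.mul stdPhi_cont.measurable).mul
      (stdCdf_meas.comp (measurable_id.const_mul l))).aestronglyMeasurable
  · refine Eventually.of_forall fun t => ?_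
    rw [Real.norm_eq_abs, abs_mul, abs_of_pos (mul_pos two_pos (stdPhi_pos t))]
    have h1 := stdCdf_nonneg (l * t)
    have h2 := stdCdf_le_one (l * t)
    have h3 := stdPhi_pos t
    rw [abs_of_nonneg h1]
    nlinarith

lemma g_integral (l : ℝ) : ∫ t, 2 * stdPhi t * stdCdf (l * t) = 1 := by
  have hneg : ∫ t, 2 * stdPhi t * stdCdf (l * t) = ∫ t, 2 * stdPhi t * (1 - stdCdf (l * t)) := by
    have A : MeasurableEmbedding (fun x : ℝ => -x) :=
      (Homeomorph.neg ℝ).isClosedEmbedding.measurableEmbedding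
    have h0 : (∫ t, 2 * stdPhi t * stdCdf (l * t)) =
        ∫ t, 2 * stdPhi (-t) * stdCdf (l * -t) := by
      calc (∫ t, 2 * stdPhi t * stdCdf (l * t))
          = ∫ t, 2 * stdPhi t * stdCdf (l * t) ∂(Measure.map (fun x : ℝ => -x) volume) := by
            rw [show Measure.map (fun x : ℝ => -x) volume = volume from Measure.map_neg_eq_self volume]
        _ = ∫ t, 2 * stdPhi (-t) * stdCdf (l * -t) := A.integral_map _
    rw [h0]
    congr 1
    funext t
    rw [stdPhi_even, show l * -t = -(l * t) by ring, stdCdf_neg]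
  have hsum : (∫ t, 2 * stdPhi t * stdCdf (l * t)) + ∫ t, 2 * stdPhi t * (1 - stdCdf (l * t)) = 2 := by
    rw [← integral_add (g_integrable l)]
    · rw [show (fun t => 2 * stdPhi t * stdCdf (l * t) + 2 * stdPhi t * (1 - stdCdf (l * t))) = fun t => 2 * stdPhi t by funext t; ring]
      rw [integral_const_mul, stdPhi_integral]; norm_num
    · have := (stdPhi_integrable.const_mul 2).sub (g_integrable l)
      exact this.congr (Eventually.of_forall fun t => by simp only [Pi.sub_apply]; ring)
  linarith [hneg]

lemma one_sub_snCdf (l x : ℝ) :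
    1 - snCdf l x = ∫ t in Set.Ioi x, 2 * stdPhi t * stdCdf (l * t) := by
  have := intervalIntegral.integral_Iic_add_Ioi (b := x) (μ := volume)
    (g_integrable l).integrableOn (g_integrable l).integrableOn
  rw [g_integral l] at this
  unfold snCdf
  linarith

lemma two_phi_phi (l t : ℝ) :
    2 * stdPhi t * stdPhi (l * t) = Real.pi⁻¹ * Real.exp (-((1 + l ^ 2) * t ^ 2) / 2) := by
  unfold stdPhi
  rw [show 2 * ((Real.sqrt (2 * Real.pi))⁻¹ * Real.exp (-t ^ 2 / 2)) * ((Real.sqrt (2 * Real.pi))⁻¹ * Real.exp (-(l * t) ^ 2 / 2))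
      = (2 * (Real.sqrt (2 * Real.pi) * Real.sqrt (2 * Real.pi))⁻¹) * (Real.exp (-t ^ 2 / 2) * Real.exp (-(l * t) ^ 2 / 2)) by
    rw [mul_inv]; ring]
  rw [← Real.exp_add, Real.mul_self_sqrt (by positivity)]
  congr 1
  · rw [mul_inv]
    rw [show (2:ℝ) * (2⁻¹ * Real.pi⁻¹) = Real.pi⁻¹ by ring]
  · ring

lemma aux_deriv (c a k : ℝ) {t : ℝ} (hne : t ≠ 0) :
    HasDerivAt (fun s : ℝ => c * Real.exp (-(a * s ^ 2) / 2) * (s⁻¹ ^ 2 - k * s⁻¹ ^ 4))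
      (c * Real.exp (-(a * t ^ 2) / 2) *
        (-a * t⁻¹ + (a * k - 2) * t⁻¹ ^ 3 + 4 * k * t⁻¹ ^ 5)) t := by
  have hin : HasDerivAt (fun s : ℝ => -(a * s ^ 2) / 2) (-(a * (2 * t)) / 2) t := by
    have := ((hasDerivAt_pow 2 t).const_mul a).neg.div_const 2
    exact this.congr_deriv (by ring)
  have hE' := hin.exp
  have hinv : HasDerivAt (fun s : ℝ => s⁻¹) (-(t ^ 2)⁻¹) t := hasDerivAt_inv hne
  have hp2 := hinv.fun_pow 2
  have hp4 := hinv.fun_pow 4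
  have hpoly := hp2.sub (hp4.const_mul k)
  have := (hE'.const_mul c).mul hpoly
  apply this.congr_deriv
  simp only [Pi.sub_apply]
  field_simp
  linear_combination (4 * c * k * (t ^ 2 * t⁻¹ ^ 2 + t * t⁻¹ + 1) - 2 * c * t ^ 2) * mul_inv_cancel₀ hne

lemma aux_tendsto (c a k : ℝ) (ha : 0 < a) :
    Tendsto (fun s : ℝ => c * Real.exp (-(a * s ^ 2) / 2) * (s⁻¹ ^ 2 - k * s⁻¹ ^ 4))
      atTop (nhds 0) := by
  have h1 : Tendsto (fun s : ℝ => -(a * s ^ 2) / 2) atTop atBot := by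
    apply Tendsto.atBot_div_const (by norm_num : (0:ℝ) < 2)
    exact tendsto_neg_atBot_iff.mpr ((tendsto_pow_atTop two_ne_zero).const_mul_atTop ha)
  have hE : Tendsto (fun s : ℝ => c * Real.exp (-(a * s ^ 2) / 2)) atTop (nhds (c * 0)) :=
    (Real.tendsto_exp_atBot.comp h1).const_mul c
  have hinv := tendsto_inv_atTop_zero (𝕜 := ℝ)
  have hpoly : Tendsto (fun s : ℝ => s⁻¹ ^ 2 - k * s⁻¹ ^ 4) atTop (nhds (0 ^ 2 - k * 0 ^ 4)) :=
    (hinv.pow 2).sub ((hinv.pow 4).const_mul k)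
  have := hE.mul hpoly
  rw [show c * 0 * (0 ^ 2 - k * 0 ^ 4) = 0 by ring] at this
  exact this

lemma exp_int (a : ℝ) (ha : 0 < a) :
    Integrable (fun t : ℝ => Real.exp (-(a * t ^ 2) / 2)) := by
  have h := integrable_exp_neg_mul_sq (show (0:ℝ) < a / 2 by linarith)
  exact h.congr (Eventually.of_forall fun t => by ring_nf)

lemma aux_int (c a k x : ℝ) (ha : 0 < a) (hk : 0 ≤ k) (hx : 0 < x) :
    IntegrableOn (fun t : ℝ => c * Real.exp (-(a * t ^ 2) / 2) *
      (-a * t⁻¹ + (a * k - 2) * t⁻¹ ^ 3 + 4 * k * t⁻¹ ^ 5)) (Set.Ioi x) := by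
  apply Integrable.mono'
    (g := fun t : ℝ => (|c| * (a * x⁻¹ + (a * k + 2) * x⁻¹ ^ 3 + 4 * k * x⁻¹ ^ 5)) *
      Real.exp (-(a * t ^ 2) / 2))
    (((exp_int a ha).const_mul _).integrableOn)
  · apply ContinuousOn.aestronglyMeasurable _ measurableSet_Ioi
    have hi : ContinuousOn (fun t : ℝ => t⁻¹) (Set.Ioi x) := by
      apply ContinuousOn.inv₀ continuousOn_id
      intro t ht
      exact ne_of_gt (lt_trans hx ht)
    have hexp : Continuous (fun t : ℝ => c * Real.exp (-(a * t ^ 2) / 2)) := by fun_prop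
    exact hexp.continuousOn.mul
      (((continuousOn_const.mul hi).add (continuousOn_const.mul (hi.pow 3))).add
        (continuousOn_const.mul (hi.pow 5)))
  · filter_upwards [ae_restrict_mem measurableSet_Ioi] with t ht
    have ht0 : 0 < t := lt_trans hx ht
    have h1 : 0 < t⁻¹ := inv_pos.2 ht0
    have hx1 : 0 < x⁻¹ := inv_pos.2 hx
    have h2 : t⁻¹ ≤ x⁻¹ := inv_anti₀ hx ht.le
    have h3 : t⁻¹ ^ 3 ≤ x⁻¹ ^ 3 := pow_le_pow_left₀ h1.le h2 3
    have h5 : t⁻¹ ^ 5 ≤ x⁻¹ ^ 5 := pow_le_pow_left₀ h1.le h2 5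
    have h3p : 0 < t⁻¹ ^ 3 := pow_pos h1 3
    have h5p : 0 < t⁻¹ ^ 5 := pow_pos h1 5
    have h3x : 0 < x⁻¹ ^ 3 := pow_pos hx1 3
    have h5x : 0 < x⁻¹ ^ 5 := pow_pos hx1 5
    have hb : |(-a * t⁻¹ + (a * k - 2) * t⁻¹ ^ 3 + 4 * k * t⁻¹ ^ 5)|
        ≤ a * x⁻¹ + (a * k + 2) * x⁻¹ ^ 3 + 4 * k * x⁻¹ ^ 5 := by
      rw [abs_le]
      have hak : 0 ≤ a * k := mul_nonneg ha.le hk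
      have e3 : (a * k + 2) * t⁻¹ ^ 3 ≤ (a * k + 2) * x⁻¹ ^ 3 :=
        mul_le_mul_of_nonneg_left h3 (by linarith)
      have e5 : 4 * k * t⁻¹ ^ 5 ≤ 4 * k * x⁻¹ ^ 5 :=
        mul_le_mul_of_nonneg_left h5 (by linarith)
      have e1 : a * t⁻¹ ≤ a * x⁻¹ := mul_le_mul_of_nonneg_left h2 ha.le
      have p1 : 0 < a * t⁻¹ := mul_pos ha h1
      have p1x : 0 < a * x⁻¹ := mul_pos ha hx1
      have p3 : 0 ≤ a * k * t⁻¹ ^ 3 := mul_nonneg hak h3p.le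
      have p3x : 0 ≤ a * k * x⁻¹ ^ 3 := mul_nonneg hak h3x.le
      have p5 : 0 ≤ 4 * k * t⁻¹ ^ 5 := mul_nonneg (by linarith) h5p.le
      have p5x : 0 ≤ 4 * k * x⁻¹ ^ 5 := mul_nonneg (by linarith) h5x.le
      have e3' : a * k * t⁻¹ ^ 3 ≤ a * k * x⁻¹ ^ 3 := mul_le_mul_of_nonneg_left h3 hak
      constructor <;> nlinarith
    rw [Real.norm_eq_abs, abs_mul, abs_mul, abs_of_pos (Real.exp_pos _)]
    calc |c| * Real.exp (-(a * t ^ 2) / 2) * |(-a * t⁻¹ + (a * k - 2) * t⁻¹ ^ 3 + 4 * k * t⁻¹ ^ 5)|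
        ≤ |c| * Real.exp (-(a * t ^ 2) / 2) * (a * x⁻¹ + (a * k + 2) * x⁻¹ ^ 3 + 4 * k * x⁻¹ ^ 5) :=
          mul_le_mul_of_nonneg_left hb (by positivity)
      _ = |c| * (a * x⁻¹ + (a * k + 2) * x⁻¹ ^ 3 + 4 * k * x⁻¹ ^ 5) * Real.exp (-(a * t ^ 2) / 2) := by
          ring

lemma alg_id (l t : ℝ) (hl0 : l < 0) (ht : 0 < t) :
    (-l * t)⁻¹ - (-l * t)⁻¹ ^ 3 + (-l * (1 + l ^ 2))⁻¹ *
      (-(1 + l ^ 2) * t⁻¹ + ((1 + l ^ 2) * ((1 + l ^ 2) ^ 2 / l ^ 2) - 2) * t⁻¹ ^ 3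
        + 4 * ((1 + l ^ 2) ^ 2 / l ^ 2) * t⁻¹ ^ 5)
    = ((1 + l ^ 2) + 2) * -l / (1 + l ^ 2) * t⁻¹ ^ 3
      + 4 * ((1 + l ^ 2) ^ 2 / l ^ 2) / (-l * (1 + l ^ 2)) * t⁻¹ ^ 5 := by
  have h1 : l ≠ 0 := ne_of_lt hl0
  have h2 : t ≠ 0 := ht.ne'
  have h3 : (1 : ℝ) + l ^ 2 ≠ 0 := by positivity
  field_simp
  ring

theorem stmt_4 (l : ℝ) (hl : l < 0) (x : ℝ) (hx : 0 < x) :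
    1 - snCdf l x >
      (2 * stdPhi x * stdPhi (l * x) / (|l| * (1 + l ^ 2) * x ^ 2)) *
        (1 - ((1 + l ^ 2) ^ 2 / l ^ 2) * x⁻¹ ^ 2) := by
  have hl0 : l ≠ 0 := ne_of_lt hl
  have hm0 : (0:ℝ) < -l := neg_pos.2 hl
  have habs : |l| = -l := abs_of_neg hl
  have ha0 : (0:ℝ) < 1 + l ^ 2 := by positivity
  have hπ := Real.pi_pos
  have hk0 : (0:ℝ) < (1 + l ^ 2) ^ 2 / l ^ 2 := by positivity
  -- FTC on (x, ∞) for the comparison function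
  have hderiv : ∀ t ∈ Set.Ici x,
      HasDerivAt (fun s : ℝ => (Real.pi * -l * (1 + l ^ 2))⁻¹ *
          Real.exp (-((1 + l ^ 2) * s ^ 2) / 2) * (s⁻¹ ^ 2 - (1 + l ^ 2) ^ 2 / l ^ 2 * s⁻¹ ^ 4))
        ((Real.pi * -l * (1 + l ^ 2))⁻¹ * Real.exp (-((1 + l ^ 2) * t ^ 2) / 2) *
          (-(1 + l ^ 2) * t⁻¹ + ((1 + l ^ 2) * ((1 + l ^ 2) ^ 2 / l ^ 2) - 2) * t⁻¹ ^ 3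
            + 4 * ((1 + l ^ 2) ^ 2 / l ^ 2) * t⁻¹ ^ 5)) t :=
    fun t ht => aux_deriv _ _ _ (ne_of_gt (lt_of_lt_of_le hx ht))
  have hftc : (∫ t in Set.Ioi x, (Real.pi * -l * (1 + l ^ 2))⁻¹ *
          Real.exp (-((1 + l ^ 2) * t ^ 2) / 2) *
          (-(1 + l ^ 2) * t⁻¹ + ((1 + l ^ 2) * ((1 + l ^ 2) ^ 2 / l ^ 2) - 2) * t⁻¹ ^ 3
            + 4 * ((1 + l ^ 2) ^ 2 / l ^ 2) * t⁻¹ ^ 5))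
      = 0 - (Real.pi * -l * (1 + l ^ 2))⁻¹ * Real.exp (-((1 + l ^ 2) * x ^ 2) / 2) *
          (x⁻¹ ^ 2 - (1 + l ^ 2) ^ 2 / l ^ 2 * x⁻¹ ^ 4) :=
    integral_Ioi_of_hasDerivAt_of_tendsto' hderiv
      (aux_int _ _ _ x ha0 hk0.le hx) (aux_tendsto _ _ _ ha0)
  -- pointwise comparison on (x, ∞)
  have hpt : ∀ t ∈ Set.Ioi x,
      -((Real.pi * -l * (1 + l ^ 2))⁻¹ * Real.exp (-((1 + l ^ 2) * t ^ 2) / 2) *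
          (-(1 + l ^ 2) * t⁻¹ + ((1 + l ^ 2) * ((1 + l ^ 2) ^ 2 / l ^ 2) - 2) * t⁻¹ ^ 3
            + 4 * ((1 + l ^ 2) ^ 2 / l ^ 2) * t⁻¹ ^ 5))
        < 2 * stdPhi t * stdCdf (l * t) := by
    intro t ht
    have ht0 : 0 < t := lt_trans hx ht
    have hmt : 0 < -l * t := mul_pos hm0 ht0
    have hcdf : stdCdf (l * t) = ∫ s in Set.Ioi (-l * t), stdPhi s := by
      rw [show l * t = -(-l * t) by ring, stdCdf_neg]
      have := stdCdf_add_Ioi (-l * t)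
      linarith
    have hmills := mills hmt
    have hlow : 2 * stdPhi t * (stdPhi (-l * t) * ((-l * t)⁻¹ - (-l * t)⁻¹ ^ 3))
        < 2 * stdPhi t * stdCdf (l * t) := by
      rw [hcdf]
      exact mul_lt_mul_of_pos_left hmills (mul_pos two_pos (stdPhi_pos t))
    refine lt_of_le_of_lt ?_ hlow
    have hphi : stdPhi (-l * t) = stdPhi (l * t) := by
      rw [show -l * t = -(l * t) by ring, stdPhi_even]
    rw [hphi]
    have h2 : 2 * stdPhi t * stdPhi (l * t)
        = Real.pi⁻¹ * Real.exp (-((1 + l ^ 2) * t ^ 2) / 2) := two_phi_phi l t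
    have hstep : (Real.pi * -l * (1 + l ^ 2))⁻¹ * Real.exp (-((1 + l ^ 2) * t ^ 2) / 2) *
          (-(1 + l ^ 2) * t⁻¹ + ((1 + l ^ 2) * ((1 + l ^ 2) ^ 2 / l ^ 2) - 2) * t⁻¹ ^ 3
            + 4 * ((1 + l ^ 2) ^ 2 / l ^ 2) * t⁻¹ ^ 5)
        = Real.pi⁻¹ * Real.exp (-((1 + l ^ 2) * t ^ 2) / 2) *
          ((-l * (1 + l ^ 2))⁻¹ *
            (-(1 + l ^ 2) * t⁻¹ + ((1 + l ^ 2) * ((1 + l ^ 2) ^ 2 / l ^ 2) - 2) * t⁻¹ ^ 3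
              + 4 * ((1 + l ^ 2) ^ 2 / l ^ 2) * t⁻¹ ^ 5)) := by
      rw [show Real.pi * -l * (1 + l ^ 2) = Real.pi * (-l * (1 + l ^ 2)) by ring, mul_inv]
      ring
    have hEq : 2 * stdPhi t * (stdPhi (l * t) * ((-l * t)⁻¹ - (-l * t)⁻¹ ^ 3))
        + (Real.pi * -l * (1 + l ^ 2))⁻¹ * Real.exp (-((1 + l ^ 2) * t ^ 2) / 2) *
            (-(1 + l ^ 2) * t⁻¹ + ((1 + l ^ 2) * ((1 + l ^ 2) ^ 2 / l ^ 2) - 2) * t⁻¹ ^ 3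
              + 4 * ((1 + l ^ 2) ^ 2 / l ^ 2) * t⁻¹ ^ 5)
        = Real.pi⁻¹ * Real.exp (-((1 + l ^ 2) * t ^ 2) / 2) *
            (((1 + l ^ 2) + 2) * -l / (1 + l ^ 2) * t⁻¹ ^ 3
              + 4 * ((1 + l ^ 2) ^ 2 / l ^ 2) / (-l * (1 + l ^ 2)) * t⁻¹ ^ 5) := by
      rw [show 2 * stdPhi t * (stdPhi (l * t) * ((-l * t)⁻¹ - (-l * t)⁻¹ ^ 3))
          = 2 * stdPhi t * stdPhi (l * t) * ((-l * t)⁻¹ - (-l * t)⁻¹ ^ 3) by ring, h2]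
      rw [hstep, ← mul_add, alg_id l t hl ht0]
    have hpos : 0 ≤ Real.pi⁻¹ * Real.exp (-((1 + l ^ 2) * t ^ 2) / 2) *
            (((1 + l ^ 2) + 2) * -l / (1 + l ^ 2) * t⁻¹ ^ 3
              + 4 * ((1 + l ^ 2) ^ 2 / l ^ 2) / (-l * (1 + l ^ 2)) * t⁻¹ ^ 5) := by
      apply mul_nonneg (mul_nonneg (inv_nonneg.2 hπ.le) (Real.exp_pos _).le)
      apply add_nonneg
      · exact mul_nonneg (div_nonneg (mul_nonneg (by nlinarith) hm0.le) ha0.le)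
          (pow_nonneg (inv_pos.2 ht0).le 3)
      · exact mul_nonneg (div_nonneg (by positivity) (mul_pos hm0 ha0).le)
          (pow_nonneg (inv_pos.2 ht0).le 5)
    linarith
  -- strict integral comparison
  have hint_g : IntegrableOn (fun t => 2 * stdPhi t * stdCdf (l * t)) (Set.Ioi x) :=
    (g_integrable l).integrableOn
  have hint_h : IntegrableOn (fun t : ℝ => (Real.pi * -l * (1 + l ^ 2))⁻¹ *
      Real.exp (-((1 + l ^ 2) * t ^ 2) / 2) *
      (-(1 + l ^ 2) * t⁻¹ + ((1 + l ^ 2) * ((1 + l ^ 2) ^ 2 / l ^ 2) - 2) * t⁻¹ ^ 3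
        + 4 * ((1 + l ^ 2) ^ 2 / l ^ 2) * t⁻¹ ^ 5)) (Set.Ioi x) :=
    aux_int _ _ _ x ha0 hk0.le hx
  have hD : 0 < ∫ t in Set.Ioi x, (2 * stdPhi t * stdCdf (l * t)
      + (Real.pi * -l * (1 + l ^ 2))⁻¹ * Real.exp (-((1 + l ^ 2) * t ^ 2) / 2) *
          (-(1 + l ^ 2) * t⁻¹ + ((1 + l ^ 2) * ((1 + l ^ 2) ^ 2 / l ^ 2) - 2) * t⁻¹ ^ 3
            + 4 * ((1 + l ^ 2) ^ 2 / l ^ 2) * t⁻¹ ^ 5)) := by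
    rw [setIntegral_pos_iff_support_of_nonneg_ae]
    · rw [Set.inter_eq_self_of_subset_right fun t ht =>
        Function.mem_support.mpr (ne_of_gt (by have := hpt t ht; linarith)), Real.volume_Ioi]
      simp
    · filter_upwards [ae_restrict_mem measurableSet_Ioi] with t ht
      have := hpt t ht
      simp only [Pi.zero_apply]
      linarith
    · exact hint_g.add hint_h
  rw [integral_add hint_g hint_h, hftc] at hD
  have hRHSeq : (2 * stdPhi x * stdPhi (l * x) / (|l| * (1 + l ^ 2) * x ^ 2)) *
        (1 - ((1 + l ^ 2) ^ 2 / l ^ 2) * x⁻¹ ^ 2)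
      = (Real.pi * -l * (1 + l ^ 2))⁻¹ * Real.exp (-((1 + l ^ 2) * x ^ 2) / 2) *
          (x⁻¹ ^ 2 - (1 + l ^ 2) ^ 2 / l ^ 2 * x⁻¹ ^ 4) := by
    rw [habs, two_phi_phi]
    have hxne : x ≠ 0 := hx.ne'
    have h3 : (1 : ℝ) + l ^ 2 ≠ 0 := ha0.ne'
    have hπne : Real.pi ≠ 0 := hπ.ne'
    field_simp
  rw [gt_iff_lt, hRHSeq, one_sub_snCdf]
  linarith
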